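/- Let d ≥ 1 and let k ∈ ℝ^d satisfy |Σ_{j=1}^d cos k_j| < d and cos k_j ≠ 0 for every j. Let φ(k) = arccos( (1/d) Σ_{j=1}^d cos k_j ) ∈ (0,π), so that sin φ(k) > 0 and φ is smooth near k. Then the partial derivatives are x_j := ∂φ/∂k_j = sin k_j / (d sin φ(k)), and the determinant of the Hessian matrix of φ at k equals det(Hess φ)(k) = [ ∏_{l=1}^d ( cos k_l / (d sin φ(k)) ) ] · ( 1 − d cos φ(k) Σ_{j=1}^d x_j² / cos k_j ). -/

import Mathlib

open Finset

/-- `φ(k) = arccos((1/d) ∑_j cos k_j)`, the arccosine of the Fourier symbol of the simple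
random walk on `ℤ^d`. -/
noncomputable def rwPhase (d : ℕ) (k : Fin d → ℝ) : ℝ :=
  Real.arccos ((1 / (d : ℝ)) * ∑ j, Real.cos (k j))

/-- the Hessian matrix of a function on `ℝ^d`, with entries the iterated directional
derivatives along the standard basis vectors -/
noncomputable def hessian (d : ℕ) (f : (Fin d → ℝ) → ℝ) (k : Fin d → ℝ) :
    Matrix (Fin d) (Fin d) ℝ :=
  Matrix.of fun l m =>
    fderiv ℝ (fun k' => fderiv ℝ f k' (Pi.single m 1)) k (Pi.single l 1)

/-- If `|∑_j cos k_j| < d` and `cos k_j ≠ 0` for every `j`, then the partial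
derivatives of `φ(k) = arccos((1/d) ∑ cos k_j)` are `x_j = sin k_j / (d sin φ(k))` and the
Hessian determinant is
`det Hess φ (k) = (∏_l cos k_l / (d sin φ(k))) (1 − d cos φ(k) ∑_j x_j² / cos k_j)`. -/
noncomputable def gsym (d : ℕ) (k : Fin d → ℝ) : ℝ := (1 / (d : ℝ)) * ∑ j, Real.cos (k j)

noncomputable def Gder (d : ℕ) (k : Fin d → ℝ) : (Fin d → ℝ) →L[ℝ] ℝ :=
  (1 / (d : ℝ)) • ∑ j, (-Real.sin (k j)) • (ContinuousLinearMap.proj j : (Fin d → ℝ) →L[ℝ] ℝ)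

lemma hasFDerivAt_gsym (d : ℕ) (k : Fin d → ℝ) : HasFDerivAt (gsym d) (Gder d k) k := by
  have h : ∀ j : Fin d, HasFDerivAt (fun k' : Fin d → ℝ => Real.cos (k' j))
      ((-Real.sin (k j)) • (ContinuousLinearMap.proj j : (Fin d → ℝ) →L[ℝ] ℝ)) k := fun j =>
    (by have := (Real.hasDerivAt_cos (k j)).comp_hasFDerivAt k (hasFDerivAt_apply (𝕜 := ℝ) j k); exact this)
  exact (HasFDerivAt.fun_sum (fun j _ => h j)).const_mul _

lemma Gder_apply (d : ℕ) (k : Fin d → ℝ) (m : Fin d) :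
    Gder d k (Pi.single m 1) = -Real.sin (k m) / d := by
  simp only [Gder, ContinuousLinearMap.smul_apply, ContinuousLinearMap.sum_apply,
    ContinuousLinearMap.proj_apply, smul_eq_mul]
  rw [Finset.sum_eq_single m]
  · simp; ring
  · intro b _ hb; simp [Pi.single_apply, hb]
  · simp

lemma hasFDerivAt_rwPhase (d : ℕ) (k : Fin d → ℝ) (hg : |gsym d k| < 1) :
    HasFDerivAt (rwPhase d) ((-(1 / Real.sqrt (1 - gsym d k ^ 2))) • Gder d k) k := by
  have h1 : gsym d k ≠ -1 := by rw [abs_lt] at hg; intro h; rw [h] at hg; norm_num at hg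
  have h2 : gsym d k ≠ 1 := by rw [abs_lt] at hg; intro h; rw [h] at hg; norm_num at hg
  exact (Real.hasDerivAt_arccos h1 h2).comp_hasFDerivAt k (hasFDerivAt_gsym d k)

lemma fderiv_rwPhase_apply (d : ℕ) (k : Fin d → ℝ) (hg : |gsym d k| < 1) (m : Fin d) :
    fderiv ℝ (rwPhase d) k (Pi.single m 1)
      = Real.sin (k m) * ((d : ℝ) * Real.sqrt (1 - gsym d k ^ 2))⁻¹ := by
  rw [(hasFDerivAt_rwPhase d k hg).fderiv]
  rw [ContinuousLinearMap.smul_apply, Gder_apply, smul_eq_mul]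
  rw [div_eq_mul_inv, div_eq_mul_inv, mul_inv]
  ring

-- derivative of ψ y = (d * √(1-y²))⁻¹
lemma hasDerivAt_psi (d : ℕ) (hd : (0:ℝ) < d) (y : ℝ) (hy : |y| < 1) :
    HasDerivAt (fun y : ℝ => ((d : ℝ) * Real.sqrt (1 - y ^ 2))⁻¹)
      (y / ((d:ℝ) * Real.sqrt (1 - y ^ 2) ^ 3)) y := by
  rw [abs_lt] at hy
  have h0 : 0 < 1 - y ^ 2 := by nlinarith
  have hw : 0 < Real.sqrt (1 - y ^ 2) := Real.sqrt_pos.2 h0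
  have h1 : HasDerivAt (fun y : ℝ => 1 - y ^ 2) (-(2 * y)) y := by
    have := (hasDerivAt_pow 2 y).const_sub 1
    simpa using this
  have h2 : HasDerivAt (fun y : ℝ => Real.sqrt (1 - y ^ 2))
      (1 / (2 * Real.sqrt (1 - y ^ 2)) * (-(2 * y))) y :=
    (Real.hasDerivAt_sqrt (ne_of_gt h0)).comp y h1
  have h3 := (h2.const_mul (d : ℝ)).inv (by positivity)
  refine h3.congr_deriv ?_
  have hsq : Real.sqrt (1 - y ^ 2) ^ 2 = 1 - y ^ 2 := Real.sq_sqrt (le_of_lt h0)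
  field_simp

lemma continuous_gsym (d : ℕ) : Continuous (gsym d) := by
  unfold gsym
  exact continuous_const.mul (continuous_finset_sum _ fun j _ =>
    Real.continuous_cos.comp (continuous_apply j))

lemma hessian_entry (d : ℕ) (hd : 1 ≤ d) (k : Fin d → ℝ) (hg : |gsym d k| < 1)
    (l m : Fin d) :
    hessian d (rwPhase d) k l m
      = (if l = m then Real.cos (k l) else 0) / ((d : ℝ) * Real.sqrt (1 - gsym d k ^ 2))
        - (gsym d k / Real.sqrt (1 - gsym d k ^ 2))
          * (Real.sin (k l) / ((d : ℝ) * Real.sqrt (1 - gsym d k ^ 2)))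
          * (Real.sin (k m) / ((d : ℝ) * Real.sqrt (1 - gsym d k ^ 2))) := by
  have hD : (0:ℝ) < d := by exact_mod_cast Nat.lt_of_lt_of_le Nat.zero_lt_one hd
  have habs := abs_lt.mp hg
  have h0 : 0 < 1 - gsym d k ^ 2 := by nlinarith [habs.1, habs.2]
  have hw : 0 < Real.sqrt (1 - gsym d k ^ 2) := Real.sqrt_pos.2 h0
  have hU : IsOpen {k' : Fin d → ℝ | |gsym d k'| < 1} :=
    isOpen_lt (continuous_abs.comp (continuous_gsym d)) continuous_const
  have hev : (fun k' => fderiv ℝ (rwPhase d) k' (Pi.single m 1))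
      =ᶠ[nhds k] fun k' => Real.sin (k' m) * ((d : ℝ) * Real.sqrt (1 - gsym d k' ^ 2))⁻¹ :=
    Filter.eventually_of_mem (hU.mem_nhds hg) fun k' h => fderiv_rwPhase_apply d k' h m
  have hstep : hessian d (rwPhase d) k l m
      = fderiv ℝ (fun k' => Real.sin (k' m) * ((d : ℝ) * Real.sqrt (1 - gsym d k' ^ 2))⁻¹) k
          (Pi.single l 1) := by
    simp only [hessian, Matrix.of_apply]
    rw [hev.fderiv_eq]
  have hsin : HasFDerivAt (fun k' : Fin d → ℝ => Real.sin (k' m))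
      ((Real.cos (k m)) • (ContinuousLinearMap.proj m : (Fin d → ℝ) →L[ℝ] ℝ)) k :=
    by have := (Real.hasDerivAt_sin (k m)).comp_hasFDerivAt k (hasFDerivAt_apply (𝕜 := ℝ) m k); exact this
  have hpsi : HasFDerivAt (fun k' : Fin d → ℝ => ((d : ℝ) * Real.sqrt (1 - gsym d k' ^ 2))⁻¹)
      ((gsym d k / ((d:ℝ) * Real.sqrt (1 - gsym d k ^ 2) ^ 3)) • Gder d k) k :=
    (hasDerivAt_psi d hD (gsym d k) hg).comp_hasFDerivAt k (hasFDerivAt_gsym d k)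
  have hmul := hsin.fun_mul hpsi
  rw [hstep, hmul.fderiv]
  simp only [ContinuousLinearMap.add_apply, ContinuousLinearMap.smul_apply, Gder_apply,
    ContinuousLinearMap.proj_apply, smul_eq_mul, Pi.single_apply]
  rcases eq_or_ne l m with h | h
  · subst h
    simp only [if_pos rfl, eq_self_iff_true, if_true]
    field_simp
    ring
  · rw [if_neg (fun hh => h hh.symm), if_neg h]
    field_simp
    ring


theorem rwPhase_hessian_det (d : ℕ) (hd : 1 ≤ d) (k : Fin d → ℝ)
    (h1 : |∑ j, Real.cos (k j)| < d) (h2 : ∀ j, Real.cos (k j) ≠ 0) :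
    (∀ j, fderiv ℝ (rwPhase d) k (Pi.single j 1)
      = Real.sin (k j) / (d * Real.sin (rwPhase d k))) ∧
    (hessian d (rwPhase d) k).det
      = (∏ l, Real.cos (k l) / (d * Real.sin (rwPhase d k))) *
        (1 - d * Real.cos (rwPhase d k) *
          ∑ j, (Real.sin (k j) / (d * Real.sin (rwPhase d k))) ^ 2 / Real.cos (k j)) := by
  have hD : (0:ℝ) < d := by exact_mod_cast Nat.lt_of_lt_of_le Nat.zero_lt_one hd
  have hg : |gsym d k| < 1 := by
    unfold gsym
    rw [abs_mul, abs_of_pos (by positivity : (0:ℝ) < 1 / d)]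
    rw [div_mul_eq_mul_div, one_mul, div_lt_one hD]
    exact h1
  have habs := abs_lt.mp hg
  have h0 : 0 < 1 - gsym d k ^ 2 := by nlinarith [habs.1, habs.2]
  set w := Real.sqrt (1 - gsym d k ^ 2) with hw_def
  have hw : 0 < w := Real.sqrt_pos.2 h0
  have hsinphi : Real.sin (rwPhase d k) = w := by
    rw [rwPhase, Real.sin_arccos]; rfl
  have hcosphi : Real.cos (rwPhase d k) = gsym d k := by
    rw [rwPhase]
    exact Real.cos_arccos habs.1.le habs.2.le
  constructor
  · intro j
    rw [fderiv_rwPhase_apply d k hg j, hsinphi, div_eq_mul_inv]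
  -- matrix decomposition
  have hMat : hessian d (rwPhase d) k
      = Matrix.diagonal (fun l => Real.cos (k l) / ((d:ℝ) * w))
        + Matrix.replicateCol Unit (fun l => Real.sin (k l) / ((d:ℝ) * w))
          * Matrix.replicateRow Unit (fun m => (-(gsym d k) / w) * (Real.sin (k m) / ((d:ℝ) * w))) := by
    ext l m
    rw [Matrix.add_apply, hessian_entry d hd k hg l m, Matrix.diagonal_apply,
      Matrix.mul_apply]
    simp only [Matrix.replicateCol_apply, Matrix.replicateRow_apply, Finset.univ_unique, Finset.sum_singleton]
    rcases eq_or_ne l m with h | h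
    · subst h; rw [if_pos rfl, if_pos rfl]; ring
    · rw [if_neg h, if_neg h]; ring
  have hAdet : (Matrix.diagonal (fun l => Real.cos (k l) / ((d:ℝ) * w))).det
      = ∏ l, Real.cos (k l) / ((d:ℝ) * w) := Matrix.det_diagonal
  have hA : IsUnit (Matrix.diagonal (fun l => Real.cos (k l) / ((d:ℝ) * w))).det := by
    rw [hAdet]
    exact isUnit_iff_ne_zero.2 (Finset.prod_ne_zero_iff.2 fun l _ =>
      div_ne_zero (h2 l) (by positivity))
  rw [hMat, Matrix.det_add_replicateCol_mul_replicateRow hA, hAdet]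
  rw [hsinphi, hcosphi]
  congr 1
  -- compute the 1×1 determinant
  have hInv : (Matrix.diagonal (fun l => Real.cos (k l) / ((d:ℝ) * w)))⁻¹
      = Matrix.diagonal (fun l => ((d:ℝ) * w) / Real.cos (k l)) := by
    apply Matrix.inv_eq_right_inv
    rw [Matrix.diagonal_mul_diagonal]
    have he : (fun l => Real.cos (k l) / ((d:ℝ) * w) * (((d:ℝ) * w) / Real.cos (k l)))
        = fun _ : Fin d => (1:ℝ) := by
      funext l
      rw [div_mul_div_comm, mul_comm]
      exact div_self (mul_ne_zero (mul_pos hD hw).ne' (h2 l))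
    rw [he, Matrix.diagonal_one]
  rw [Matrix.det_unique, hInv]
  simp only [Matrix.add_apply, Matrix.one_apply_eq, Matrix.mul_apply, Matrix.replicateRow_apply,
    Matrix.replicateCol_apply, Matrix.diagonal_apply, mul_ite, ite_mul, mul_zero, zero_mul,
    Finset.sum_ite_eq, Finset.sum_ite_eq', Finset.mem_univ, if_true]
  rw [sub_eq_add_neg]
  congr 1
  rw [Finset.mul_sum, ← Finset.sum_neg_distrib]
  apply Finset.sum_congr rfl
  intro j _
  have hcj := h2 j
  field_simp
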